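/- arXiv:2107.06022 — 2 statements merged into one kernel-verified Lean document; each statement's English description precedes it below -/
import Mathlib

section
/- Let ε ∈ (0,1) and let p ≥ 4(1+ε)/ε be a real number. Then there exists a constant C, depending only on p and ε, such that for every continuous function f : [0,1] → ℝ: sup_{t ∈ [0,1]} |f(t)|^p ≤ C ( ∫_0^1 ∫_0^1 |f(t) − f(s)|^p / |t − s|^{pε/(1+ε)} dt ds + |f(0)|^p ). -/
open MeasureTheory Set
open scoped ENNReal NNReal

noncomputable section


private lemma avg_diff_bound (f : ℝ → ℝ) (hf : ContinuousOn f (Icc 0 1))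
    (a p : ℝ) (hp : 1 < p) (ha : 0 < a)
    (c r e s ρ : ℝ) (hr : 0 < r) (hs : 0 < s)
    (hA : Icc c (c + r) ⊆ Icc 0 1) (hB : Icc e (e + s) ⊆ Icc 0 1)
    (hρ : 0 ≤ ρ)
    (hdist : ∀ u ∈ Icc c (c + r), ∀ v ∈ Icc e (e + s), |u - v| ≤ ρ)
    (I : ℝ≥0∞) (hI : I ≠ ⊤)
    (hIdef : (∫⁻ t in Icc (0:ℝ) 1, ∫⁻ s' in Icc (0:ℝ) 1,
        ENNReal.ofReal (|f t - f s'| ^ p / |t - s'| ^ a)) = I) :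
    |r⁻¹ * (∫ x in Icc c (c + r), f x) - s⁻¹ * (∫ x in Icc e (e + s), f x)|
      ≤ (ρ ^ a * I.toReal) ^ (1 / p) * (r * s) ^ (-(1 / p)) := by
  have hp0 : (0:ℝ) < p := lt_trans one_pos hp
  set A := Icc c (c + r) with hAdef
  set B := Icc e (e + s) with hBdef
  set μA := volume.restrict A with hμA
  set μB := volume.restrict B with hμB
  set π := μA.prod μB with hπdef
  have hAm : MeasurableSet A := measurableSet_Icc
  have hBm : MeasurableSet B := measurableSet_Icc
  have hAc : IsCompact A := isCompact_Icc
  have hBc : IsCompact B := isCompact_Icc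
  have hπ : π = (volume : Measure (ℝ × ℝ)).restrict (A ×ˢ B) := by
    rw [hπdef, hμA, hμB, Measure.prod_restrict, ← Measure.volume_eq_prod]
  have hvolA : volume A = ENNReal.ofReal r := by
    rw [hAdef, Real.volume_Icc]; norm_num
  have hvolB : volume B = ENNReal.ofReal s := by
    rw [hBdef, Real.volume_Icc]; norm_num
  haveI : IsFiniteMeasure μA := ⟨by rw [hμA, Measure.restrict_apply_univ, hvolA]; exact ENNReal.ofReal_lt_top⟩
  haveI : IsFiniteMeasure μB := ⟨by rw [hμB, Measure.restrict_apply_univ, hvolB]; exact ENNReal.ofReal_lt_top⟩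
  have hμAuniv : μA univ = ENNReal.ofReal r := by rw [hμA, Measure.restrict_apply_univ, hvolA]
  have hμBuniv : μB univ = ENNReal.ofReal s := by rw [hμB, Measure.restrict_apply_univ, hvolB]
  -- continuity of the difference on the product
  have hdcont : ContinuousOn (fun z : ℝ × ℝ => f z.1 - f z.2) (A ×ˢ B) := by
    apply ContinuousOn.sub
    · exact hf.comp continuous_fst.continuousOn (fun z hz => hA hz.1)
    · exact hf.comp continuous_snd.continuousOn (fun z hz => hB hz.2)
  have hint : Integrable (fun z : ℝ × ℝ => f z.1 - f z.2) π := by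
    rw [hπ]
    exact hdcont.integrableOn_compact (hAc.prod hBc)
  have hfA : Integrable f μA := (hf.mono hA).integrableOn_compact hAc
  have hfB : Integrable f μB := (hf.mono hB).integrableOn_compact hBc
  set aA := ∫ x in A, f x with haA
  set aB := ∫ x in B, f x with haB
  have inner : ∀ x : ℝ, (∫ y, (f x - f y) ∂μB) = s * f x - aB := by
    intro x
    rw [integral_sub (integrable_const _) hfB, integral_const, measureReal_def, hμBuniv, smul_eq_mul,
      ENNReal.toReal_ofReal hs.le]
  have key : (∫ z : ℝ × ℝ, (f z.1 - f z.2) ∂π) = s * aA - r * aB := by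
    rw [hπdef, integral_prod _ hint]
    simp only [inner]
    rw [integral_sub (hfA.const_mul s) (integrable_const _), integral_const, measureReal_def, hμAuniv,
      smul_eq_mul, ENNReal.toReal_ofReal hr.le, integral_const_mul]
  -- step 2 : bound by integral of abs
  have h2 : |∫ z : ℝ × ℝ, (f z.1 - f z.2) ∂π| ≤ ∫ z : ℝ × ℝ, |f z.1 - f z.2| ∂π := by
    simpa [Real.norm_eq_abs] using
      norm_integral_le_integral_norm (μ := π) (f := fun z : ℝ × ℝ => f z.1 - f z.2)
  have hDint : Integrable (fun z : ℝ × ℝ => |f z.1 - f z.2|) π := hint.abs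
  have h3 : ENNReal.ofReal (∫ z : ℝ × ℝ, |f z.1 - f z.2| ∂π)
      = ∫⁻ z : ℝ × ℝ, ENNReal.ofReal |f z.1 - f z.2| ∂π :=
    ofReal_integral_eq_lintegral_ofReal hDint (Filter.Eventually.of_forall fun z => abs_nonneg _)
  -- measurability
  have hdm : AEMeasurable (fun z : ℝ × ℝ => f z.1 - f z.2) π := by
    rw [hπ]; exact hdcont.aemeasurable (hAm.prod hBm)
  have hDm : AEMeasurable (fun z : ℝ × ℝ => ENNReal.ofReal |f z.1 - f z.2|) π :=
    ENNReal.measurable_ofReal.comp_aemeasurable (continuous_abs.measurable.comp_aemeasurable hdm)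
  -- Hölder with exponent p and its conjugate
  set q := Real.conjExponent p with hqdef
  have hpq : p.HolderConjugate q := Real.HolderConjugate.conjExponent hp
  have holder := ENNReal.lintegral_mul_le_Lp_mul_Lq π hpq hDm aemeasurable_const
    (g := fun _ : ℝ × ℝ => (1:ℝ≥0∞))
  simp only [mul_one, Pi.mul_apply, Pi.one_apply, ENNReal.one_rpow, lintegral_one] at holder
  have hπuniv : π univ = ENNReal.ofReal (r * s) := by
    rw [hπdef, ← univ_prod_univ, Measure.prod_prod, hμAuniv, hμBuniv,
      ENNReal.ofReal_mul hr.le]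
  -- step 4 : bound the p-th power integral by the big double integral
  set G : ℝ × ℝ → ℝ≥0∞ := fun z => ENNReal.ofReal (|f z.1 - f z.2| ^ p / |z.1 - z.2| ^ a)
    with hGdef
  have hIccm : MeasurableSet (Icc (0:ℝ) 1) := measurableSet_Icc
  have hprodIcc : (volume : Measure (ℝ × ℝ)).restrict (Icc 0 1 ×ˢ Icc 0 1)
      = (volume.restrict (Icc (0:ℝ) 1)).prod (volume.restrict (Icc (0:ℝ) 1)) := by
    rw [Measure.volume_eq_prod, Measure.prod_restrict]
  have hdcont2 : ContinuousOn (fun z : ℝ × ℝ => f z.1 - f z.2) (Icc 0 1 ×ˢ Icc 0 1) := by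
    apply ContinuousOn.sub
    · exact hf.comp continuous_fst.continuousOn (fun z hz => hz.1)
    · exact hf.comp continuous_snd.continuousOn (fun z hz => hz.2)
  have hden : Measurable (fun z : ℝ × ℝ => |z.1 - z.2| ^ a) :=
    (Real.continuous_rpow_const ha.le).measurable.comp
      ((measurable_fst.sub measurable_snd).abs)
  have hGm : AEMeasurable G ((volume : Measure (ℝ × ℝ)).restrict (Icc 0 1 ×ˢ Icc 0 1)) := by
    have h1 : AEMeasurable (fun z : ℝ × ℝ => |f z.1 - f z.2| ^ p)
        ((volume : Measure (ℝ × ℝ)).restrict (Icc 0 1 ×ˢ Icc 0 1)) :=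
      (hdcont2.abs.rpow_const (fun x _ => Or.inr hp0.le)).aemeasurable (hIccm.prod hIccm)
    exact ENNReal.measurable_ofReal.comp_aemeasurable (h1.div hden.aemeasurable)
  have hfub : (∫⁻ z in Icc 0 1 ×ˢ Icc 0 1, G z) = I := by
    rw [hprodIcc, lintegral_prod _ (hprodIcc ▸ hGm), ← hIdef]
  have hptwise : ∀ z ∈ A ×ˢ B,
      ENNReal.ofReal |f z.1 - f z.2| ^ p ≤ ENNReal.ofReal (ρ ^ a) * G z := by
    rintro ⟨u, v⟩ ⟨hu, hv⟩
    rw [ENNReal.ofReal_rpow_of_nonneg (abs_nonneg _) hp0.le, hGdef]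
    rw [← ENNReal.ofReal_mul (by positivity)]
    apply ENNReal.ofReal_le_ofReal
    rcases eq_or_ne u v with hEq | hNe
    · subst hEq
      rw [sub_self, abs_zero, Real.zero_rpow hp0.ne']
      positivity
    · have hΔ : 0 < |u - v| := abs_pos.2 (sub_ne_zero.2 hNe)
      have hΔa : 0 < |u - v| ^ a := Real.rpow_pos_of_pos hΔ a
      dsimp only
      have h1 : |u - v| ^ a ≤ ρ ^ a := Real.rpow_le_rpow (abs_nonneg _) (hdist u hu v hv) ha.le
      calc |f u - f v| ^ p = |u - v| ^ a * (|f u - f v| ^ p / |u - v| ^ a) := by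
            field_simp
        _ ≤ ρ ^ a * (|f u - f v| ^ p / |u - v| ^ a) := by
            apply mul_le_mul_of_nonneg_right h1 (by positivity)
  have h4 : (∫⁻ z : ℝ × ℝ, ENNReal.ofReal |f z.1 - f z.2| ^ p ∂π)
      ≤ ENNReal.ofReal (ρ ^ a) * I := by
    calc (∫⁻ z : ℝ × ℝ, ENNReal.ofReal |f z.1 - f z.2| ^ p ∂π)
        ≤ ∫⁻ z : ℝ × ℝ, ENNReal.ofReal (ρ ^ a) * G z ∂π := by
          rw [hπ]
          exact lintegral_mono_ae ((ae_restrict_iff' (hAm.prod hBm)).2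
            (Filter.Eventually.of_forall hptwise))
      _ = ENNReal.ofReal (ρ ^ a) * ∫⁻ z : ℝ × ℝ, G z ∂π :=
          lintegral_const_mul' _ _ ENNReal.ofReal_ne_top
      _ ≤ ENNReal.ofReal (ρ ^ a) * ∫⁻ z in Icc 0 1 ×ˢ Icc 0 1, G z := by
          apply mul_le_mul_right
          rw [hπ]
          exact lintegral_mono' (Measure.restrict_mono (prod_mono hA hB) le_rfl) le_rfl
      _ = ENNReal.ofReal (ρ ^ a) * I := by rw [hfub]
  -- combine in ℝ≥0∞
  have hENN : ENNReal.ofReal (∫ z : ℝ × ℝ, |f z.1 - f z.2| ∂π)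
      ≤ (ENNReal.ofReal (ρ ^ a) * I) ^ (1 / p) * ENNReal.ofReal (r * s) ^ (1 / q) := by
    rw [h3]
    refine le_trans holder ?_
    rw [hπuniv]
    exact mul_le_mul_left (ENNReal.rpow_le_rpow h4 (by positivity)) _
  have hRHSne : (ENNReal.ofReal (ρ ^ a) * I) ^ (1 / p) * ENNReal.ofReal (r * s) ^ (1 / q) ≠ ⊤ := by
    apply ENNReal.mul_ne_top
    · exact ENNReal.rpow_ne_top_of_nonneg (by positivity) (ENNReal.mul_ne_top ENNReal.ofReal_ne_top hI)
    · exact ENNReal.rpow_ne_top_of_nonneg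
        (by rw [one_div]; exact inv_nonneg.2 hpq.symm.pos.le) ENNReal.ofReal_ne_top
  have hreal : (∫ z : ℝ × ℝ, |f z.1 - f z.2| ∂π)
      ≤ (ρ ^ a * I.toReal) ^ (1 / p) * (r * s) ^ (1 / q) := by
    have := (ENNReal.ofReal_le_iff_le_toReal hRHSne).1 hENN
    refine le_trans this (le_of_eq ?_)
    rw [ENNReal.toReal_mul, ← ENNReal.toReal_rpow, ← ENNReal.toReal_rpow,
      ENNReal.toReal_mul, ENNReal.toReal_ofReal (Real.rpow_nonneg hρ a),
      ENNReal.toReal_ofReal (mul_pos hr hs).le]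
  -- final arithmetic
  have hrs : (0:ℝ) < r * s := mul_pos hr hs
  have E1 : r⁻¹ * aA - s⁻¹ * aB = (r * s)⁻¹ * (s * aA - r * aB) := by
    field_simp
  have hq1 : 1 / q = 1 - 1 / p := by
    have := hpq.inv_add_inv_eq_one
    rw [one_div, one_div]; linarith
  have hpow : (r * s)⁻¹ * (r * s) ^ (1 / q) = (r * s) ^ (-(1 / p)) := by
    rw [hq1, ← Real.rpow_neg_one (r * s), ← Real.rpow_add hrs]
    ring_nf
  calc |r⁻¹ * aA - s⁻¹ * aB| = (r * s)⁻¹ * |s * aA - r * aB| := by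
        rw [E1, abs_mul, abs_of_pos (inv_pos.2 hrs)]
    _ ≤ (r * s)⁻¹ * ((ρ ^ a * I.toReal) ^ (1 / p) * (r * s) ^ (1 / q)) := by
        apply mul_le_mul_of_nonneg_left _ (inv_pos.2 hrs).le
        rw [← key]
        exact le_trans h2 hreal
    _ = (ρ ^ a * I.toReal) ^ (1 / p) * (r * s) ^ (-(1 / p)) := by
        rw [← hpow]; ring


private lemma rpow_algebra (a p : ℝ) (hp : 1 < p) (ha : 4 ≤ a) (Ir : ℝ) (hIr : 0 ≤ Ir) (n : ℕ) :
    (((1/2:ℝ) ^ n) ^ a * Ir) ^ (1/p) * ((1/2:ℝ) ^ (n+1) * (1/2:ℝ) ^ n) ^ (-(1/p))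
      ≤ Ir ^ (1/p) * (2:ℝ) ^ ((1:ℝ)/p) * ((1/2:ℝ) ^ ((2:ℝ)/p)) ^ n := by
  have h2 : (0:ℝ) < 1/2 := by norm_num
  have hp0 : (0:ℝ) < p := lt_trans one_pos hp
  have hu : (0:ℝ) < 1/p := by positivity
  have e1 : (((1/2:ℝ) ^ n) ^ a) ^ (1/p) = (1/2:ℝ) ^ ((n:ℝ) * a * (1/p)) := by
    rw [← Real.rpow_natCast (1/2:ℝ) n, ← Real.rpow_mul h2.le, ← Real.rpow_mul h2.le]
  have e2 : ((1/2:ℝ) ^ (n+1) * (1/2:ℝ) ^ n) ^ (-(1/p))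
      = (1/2:ℝ) ^ (((2*n+1 : ℕ):ℝ) * (-(1/p))) := by
    rw [← pow_add, ← Real.rpow_natCast (1/2:ℝ) (n+1+n), ← Real.rpow_mul h2.le]
    norm_num
    ring_nf
  have e3 : (2:ℝ) ^ ((1:ℝ)/p) = (1/2:ℝ) ^ (-(1/p)) := by
    rw [Real.rpow_neg h2.le, ← Real.inv_rpow h2.le]
    norm_num
  have e4 : (((1/2:ℝ) ^ ((2:ℝ)/p)) ^ n) = (1/2:ℝ) ^ (((2:ℝ)/p) * (n:ℝ)) := by
    rw [← Real.rpow_natCast ((1/2:ℝ) ^ ((2:ℝ)/p)) n, ← Real.rpow_mul h2.le]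
  have hmul : (((1/2:ℝ) ^ n) ^ a * Ir) ^ (1/p)
      = (((1/2:ℝ) ^ n) ^ a) ^ (1/p) * Ir ^ (1/p) :=
    Real.mul_rpow (by positivity) hIr
  rw [hmul, e1, e2, e3, e4]
  have hkey : (1/2:ℝ) ^ ((n:ℝ) * a * (1/p)) * (1/2:ℝ) ^ (((2*n+1 : ℕ):ℝ) * (-(1/p)))
      ≤ (1/2:ℝ) ^ (-(1/p)) * (1/2:ℝ) ^ (((2:ℝ)/p) * (n:ℝ)) := by
    rw [← Real.rpow_add h2, ← Real.rpow_add h2]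
    apply Real.rpow_le_rpow_of_exponent_ge h2 (by norm_num)
    push_cast
    have h4n : (0:ℝ) ≤ (n:ℝ) * (a - 4) := by
      apply mul_nonneg (Nat.cast_nonneg n); linarith
    have expand : (n:ℝ) * a * (1/p) + (2*(n:ℝ)+1) * (-(1/p)) - (-(1/p) + 2/p * (n:ℝ))
        = ((n:ℝ) * (a-4)) * (1/p) := by
      field_simp
      ring
    nlinarith [mul_nonneg h4n hu.le]
  calc ((1/2:ℝ) ^ ((n:ℝ) * a * (1/p)) * Ir ^ (1/p)) * (1/2:ℝ) ^ (((2*n+1:ℕ):ℝ) * (-(1/p)))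
      = Ir ^ (1/p) * ((1/2:ℝ) ^ ((n:ℝ) * a * (1/p)) * (1/2:ℝ) ^ (((2*n+1:ℕ):ℝ) * (-(1/p)))) := by
        ring
    _ ≤ Ir ^ (1/p) * ((1/2:ℝ) ^ (-(1/p)) * (1/2:ℝ) ^ (((2:ℝ)/p) * (n:ℝ))) :=
        mul_le_mul_of_nonneg_left hkey (Real.rpow_nonneg hIr _)
    _ = Ir ^ (1/p) * (1/2:ℝ) ^ (-(1/p)) * (1/2:ℝ) ^ (((2:ℝ)/p) * (n:ℝ)) := by ring


private lemma chain_bound (f : ℝ → ℝ) (hf : ContinuousOn f (Icc 0 1))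
    (a p : ℝ) (hp : 1 < p) (ha : 4 ≤ a)
    (I : ℝ≥0∞) (hI : I ≠ ⊤)
    (hIdef : (∫⁻ t in Icc (0:ℝ) 1, ∫⁻ s' in Icc (0:ℝ) 1,
        ENNReal.ofReal (|f t - f s'| ^ p / |t - s'| ^ a)) = I)
    (t : ℝ) (ht : t ∈ Icc (0:ℝ) 1) :
    |f t - ∫ x in Icc (0:ℝ) 1, f x|
      ≤ I.toReal ^ (1/p) * (2:ℝ) ^ ((1:ℝ)/p) * (1 - (1/2:ℝ) ^ ((2:ℝ)/p))⁻¹ := by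
  have ha0 : (0:ℝ) < a := by linarith
  have hp0 : (0:ℝ) < p := lt_trans one_pos hp
  have hhalf : (0:ℝ) < 1/2 := by norm_num
  set θ : ℝ := (1/2:ℝ) ^ ((2:ℝ)/p) with hθdef
  have hθ0 : 0 < θ := Real.rpow_pos_of_pos hhalf _
  have hθ1 : θ < 1 := Real.rpow_lt_one hhalf.le (by norm_num) (by positivity)
  set rr : ℕ → ℝ := fun n => (1/2:ℝ) ^ n with hrrdef
  have hrpos : ∀ n, 0 < rr n := fun n => pow_pos hhalf n
  have hrr0 : rr 0 = 1 := pow_zero _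
  have hrmono : ∀ m n, m ≤ n → rr n ≤ rr m :=
    fun m n h => pow_le_pow_of_le_one hhalf.le (by norm_num) h
  have hrhalf : ∀ n, 1 ≤ n → rr n ≤ 1/2 := by
    intro n hn
    have := hrmono 1 n hn
    simpa [hrrdef] using this
  set cc : ℕ → ℝ := fun n => if n = 0 then 0 else if t ≤ 1/2 then t else t - rr n with hccdef
  set W : ℕ → Set ℝ := fun n => Icc (cc n) (cc n + rr n) with hWdef
  have hW0 : W 0 = Icc (0:ℝ) 1 := by
    simp [hWdef, hccdef, hrr0]
  have hWsub : ∀ n, W n ⊆ Icc (0:ℝ) 1 := by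
    intro n
    rcases Nat.eq_zero_or_pos n with h0 | h1
    · rw [h0, hW0]
    · have hr2 : rr n ≤ 1/2 := hrhalf n h1
      have hn0 : n ≠ 0 := by omega
      rw [hWdef, hccdef]
      simp only [hn0, if_false]
      by_cases hts : t ≤ 1/2
      · simp only [hts, if_true]
        apply Icc_subset_Icc ht.1 (by linarith)
      · simp only [hts, if_false]
        have := hrpos n
        apply Icc_subset_Icc (by push_neg at hts; linarith) (by linarith [ht.2])
  have htW : ∀ n, t ∈ W n := by
    intro n
    rcases Nat.eq_zero_or_pos n with h0 | h1
    · rw [h0, hW0]; exact ht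
    · have hn0 : n ≠ 0 := by omega
      have := hrpos n
      rw [hWdef, hccdef]
      simp only [hn0, if_false]
      by_cases hts : t ≤ 1/2 <;> simp only [hts, if_true, if_false] <;>
        constructor <;> linarith
  have hWnest : ∀ n, W (n+1) ⊆ W n := by
    intro n
    rcases Nat.eq_zero_or_pos n with h0 | h1
    · rw [h0, hW0]; exact hWsub 1
    · have hn0 : n ≠ 0 := by omega
      have hle : rr (n+1) ≤ rr n := hrmono n (n+1) (Nat.le_succ n)
      rw [hWdef, hccdef]
      simp only [hn0, if_false, Nat.succ_ne_zero]
      by_cases hts : t ≤ 1/2 <;> simp only [hts, if_true, if_false]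
      · exact Icc_subset_Icc le_rfl (by linarith)
      · exact Icc_subset_Icc (by linarith) (by linarith)
  have hdistW : ∀ n, ∀ u ∈ W (n+1), ∀ v ∈ W n, |u - v| ≤ rr n := by
    intro n u hu v hv
    have hu' : u ∈ W n := hWnest n hu
    rw [hWdef] at hu' hv
    rw [abs_le]
    constructor <;> [linarith [hu'.1, hv.2]; linarith [hu'.2, hv.1]]
  set av : ℕ → ℝ := fun n => (rr n)⁻¹ * ∫ x in W n, f x with havdef
  set Ir := I.toReal with hIrdef
  have hIr0 : 0 ≤ Ir := ENNReal.toReal_nonneg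
  -- the core estimate
  have core : ∀ n : ℕ, |av (n+1) - av n|
      ≤ Ir ^ (1/p) * (2:ℝ) ^ ((1:ℝ)/p) * θ ^ n := by
    intro n
    have h1 := avg_diff_bound f hf a p hp ha0 (cc (n+1)) (rr (n+1)) (cc n) (rr n) (rr n)
      (hrpos (n+1)) (hrpos n) (hWsub (n+1)) (hWsub n) (hrpos n).le
      (fun u hu v hv => hdistW n u hu v hv) I hI hIdef
    refine le_trans h1 ?_
    exact rpow_algebra a p hp ha Ir hIr0 n
  -- convergence of the averages to f t
  have hfW : ∀ n, IntegrableOn f (W n) := by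
    intro n
    exact ((hf.mono (hWsub n)).integrableOn_compact isCompact_Icc)
  have hvolW : ∀ n, volume (W n) = ENNReal.ofReal (rr n) := by
    intro n
    rw [hWdef, Real.volume_Icc]
    norm_num
  have hconv : Filter.Tendsto av Filter.atTop (nhds (f t)) := by
    rw [Metric.tendsto_atTop]
    intro δ hδ
    have hct : ContinuousWithinAt f (Icc 0 1) t := hf t ht
    rw [Metric.continuousWithinAt_iff] at hct
    obtain ⟨η, hη, hball⟩ := hct (δ/2) (by linarith)
    obtain ⟨N, hN⟩ : ∃ N : ℕ, rr N < η := by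
      obtain ⟨N, hN⟩ := exists_pow_lt_of_lt_one hη (by norm_num : (1/2:ℝ) < 1)
      exact ⟨N, hN⟩
    refine ⟨N, fun n hn => ?_⟩
    have hrn : rr n < η := lt_of_le_of_lt (hrmono N n hn) hN
    have hsmall : ∀ x ∈ W n, ‖f x - f t‖ ≤ δ/2 := by
      intro x hx
      have hx1 : x ∈ Icc (0:ℝ) 1 := hWsub n hx
      have hdxt : dist x t < η := by
        rw [Real.dist_eq]
        have h := htW n
        rw [hWdef] at hx h
        have : |x - t| ≤ rr n := by
          rw [abs_le]; constructor <;> [linarith [hx.1, h.2]; linarith [hx.2, h.1]]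
        linarith
      have := hball hx1 hdxt
      rw [Real.dist_eq] at this
      rw [Real.norm_eq_abs]
      linarith
    have hdiff : av n - f t = (rr n)⁻¹ * ∫ x in W n, (f x - f t) := by
      rw [integral_sub (hfW n) (integrable_const _), integral_const,
        measureReal_restrict_apply_univ, measureReal_def, hvolW n, smul_eq_mul,
        ENNReal.toReal_ofReal (hrpos n).le, havdef]
      field_simp
      rw [sub_div, mul_div_cancel_left₀ _ (hrpos n).ne']
    rw [Real.dist_eq, hdiff]
    have hbnd : ‖∫ x in W n, (f x - f t)‖ ≤ δ/2 * (volume (W n)).toReal := by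
      have hWm : MeasurableSet (W n) := by rw [hWdef]; exact measurableSet_Icc
      apply norm_setIntegral_le_of_norm_le_const _ hsmall
      rw [hvolW n]; exact ENNReal.ofReal_lt_top
    rw [Real.norm_eq_abs] at hbnd
    rw [hvolW n, ENNReal.toReal_ofReal (hrpos n).le] at hbnd
    have : |(rr n)⁻¹ * ∫ x in W n, (f x - f t)| ≤ (rr n)⁻¹ * (δ/2 * rr n) := by
      rw [abs_mul, abs_of_pos (inv_pos.2 (hrpos n))]
      exact mul_le_mul_of_nonneg_left hbnd (inv_pos.2 (hrpos n)).le
    calc |(rr n)⁻¹ * ∫ x in W n, (f x - f t)| ≤ (rr n)⁻¹ * (δ/2 * rr n) := this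
      _ = δ/2 := by rw [mul_comm, mul_assoc, mul_inv_cancel₀ (hrpos n).ne', mul_one]
      _ < δ := by linarith
  -- telescoping + geometric series
  set S := Ir ^ (1/p) * (2:ℝ) ^ ((1:ℝ)/p) * (1 - θ)⁻¹ with hSdef
  have hc0 : 0 ≤ Ir ^ (1/p) * (2:ℝ) ^ ((1:ℝ)/p) := by positivity
  have hbd : ∀ N : ℕ, |av N - av 0| ≤ S := by
    intro N
    have htel : av N - av 0 = ∑ i ∈ Finset.range N, (av (i+1) - av i) :=
      (Finset.sum_range_sub av N).symm
    rw [htel]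
    refine le_trans (Finset.abs_sum_le_sum_abs _ _) ?_
    refine le_trans (Finset.sum_le_sum fun i _ => core i) ?_
    rw [← Finset.mul_sum]
    apply mul_le_mul_of_nonneg_left _ hc0
    calc ∑ i ∈ Finset.range N, θ ^ i
        ≤ ∑' i : ℕ, θ ^ i := Summable.sum_le_tsum _ (fun i _ => pow_nonneg hθ0.le i)
          (summable_geometric_of_lt_one hθ0.le hθ1)
      _ = (1 - θ)⁻¹ := tsum_geometric_of_lt_one hθ0.le hθ1
  have hlim : Filter.Tendsto (fun N => |av N - av 0|) Filter.atTop (nhds (|f t - av 0|)) :=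
    ((hconv.sub_const (av 0)).abs)
  have hfinal : |f t - av 0| ≤ S :=
    le_of_tendsto hlim (Filter.Eventually.of_forall hbd)
  have hav0 : av 0 = ∫ x in Icc (0:ℝ) 1, f x := by
    rw [havdef]
    simp [hrr0, hW0]
  rw [← hav0]
  exact hfinal


private lemma add_rpow_le' (x y q : ℝ) (hx : 0 ≤ x) (hy : 0 ≤ y) (hq : 0 ≤ q) :
    (x + y) ^ q ≤ 2 ^ q * (x ^ q + y ^ q) := by
  have h2 : (0:ℝ) ≤ 2 := by norm_num
  rcases le_total x y with h | h
  · calc (x + y) ^ q ≤ (2 * y) ^ q := Real.rpow_le_rpow (by linarith) (by linarith) hq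
      _ = 2 ^ q * y ^ q := Real.mul_rpow h2 hy
      _ ≤ 2 ^ q * (x ^ q + y ^ q) := by
          nlinarith [Real.rpow_nonneg hx q, Real.rpow_nonneg h2 q]
  · calc (x + y) ^ q ≤ (2 * x) ^ q := Real.rpow_le_rpow (by linarith) (by linarith) hq
      _ = 2 ^ q * x ^ q := Real.mul_rpow h2 hx
      _ ≤ 2 ^ q * (x ^ q + y ^ q) := by
          nlinarith [Real.rpow_nonneg hy q, Real.rpow_nonneg h2 q]


/-- for `ε ∈ (0,1)` and real `p ≥ 4(1+ε)/ε` there is a constant `C > 0`,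
depending only on `p` and `ε`, such that for every continuous `f : [0,1] → ℝ`,
`sup_{t∈[0,1]} |f(t)|^p ≤ C(∫_0^1∫_0^1 |f(t)−f(s)|^p/|t−s|^{pε/(1+ε)} dt ds + |f(0)|^p)`,
the inequality being trivially true if the double integral is infinite. -/
theorem stmt11 (ε p : ℝ) (hε0 : 0 < ε) (hε1 : ε < 1) (hp : 4 * (1 + ε) / ε ≤ p) :
    ∃ C : ℝ, 0 < C ∧
      ∀ f : ℝ → ℝ, ContinuousOn f (Icc 0 1) →
        ENNReal.ofReal (⨆ t ∈ Icc (0 : ℝ) 1, |f t| ^ p) ≤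
          ENNReal.ofReal C *
            ((∫⁻ t in Icc (0 : ℝ) 1, ∫⁻ s in Icc (0 : ℝ) 1,
                ENNReal.ofReal (|f t - f s| ^ p / |t - s| ^ (p * ε / (1 + ε)))) +
              ENNReal.ofReal (|f 0| ^ p)) := by
  have hε' : (0:ℝ) < 1 + ε := by linarith
  have h4p : (4:ℝ) ≤ p := by
    have : (4:ℝ) ≤ 4 * (1 + ε) / ε := by
      rw [le_div_iff₀ hε0]; nlinarith
    linarith
  have hp1 : (1:ℝ) < p := by linarith
  have hp0 : (0:ℝ) < p := by linarith
  set a : ℝ := p * ε / (1 + ε) with hadef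
  have ha4 : (4:ℝ) ≤ a := by
    rw [hadef, le_div_iff₀ hε']
    rw [div_le_iff₀ hε0] at hp
    nlinarith
  set θ : ℝ := (1/2:ℝ) ^ ((2:ℝ)/p) with hθdef
  have hθ0 : 0 < θ := Real.rpow_pos_of_pos (by norm_num) _
  have hθ1 : θ < 1 := Real.rpow_lt_one (by norm_num) (by norm_num) (by positivity)
  set K : ℝ := (2:ℝ) ^ ((1:ℝ)/p) * (1 - θ)⁻¹ with hKdef
  have hK0 : 0 < K := by
    apply mul_pos (Real.rpow_pos_of_pos two_pos _)
    rw [inv_pos]; linarith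
  set C : ℝ := 2 ^ p * ((2 * K) ^ p + 1) with hCdef
  have hC0 : 0 < C := by
    apply mul_pos (Real.rpow_pos_of_pos two_pos _)
    have : (0:ℝ) ≤ (2*K) ^ p := Real.rpow_nonneg (by linarith) _
    linarith
  refine ⟨C, hC0, fun f hf => ?_⟩
  set I : ℝ≥0∞ := ∫⁻ t in Icc (0:ℝ) 1, ∫⁻ s in Icc (0:ℝ) 1,
      ENNReal.ofReal (|f t - f s| ^ p / |t - s| ^ a) with hIdef
  by_cases hItop : I = ⊤
  · rw [hItop, top_add, ENNReal.mul_top (ne_of_gt (ENNReal.ofReal_pos.2 hC0))]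
    exact le_top
  · set Ir := I.toReal with hIrdef
    have hIr0 : 0 ≤ Ir := ENNReal.toReal_nonneg
    have h0mem : (0:ℝ) ∈ Icc (0:ℝ) 1 := ⟨le_refl 0, zero_le_one⟩
    set A := ∫ x in Icc (0:ℝ) 1, f x with hAdef
    have hchain : ∀ t ∈ Icc (0:ℝ) 1, |f t - A| ≤ Ir ^ (1/p) * K := by
      intro t ht
      have := chain_bound f hf a p hp1 ha4 I hItop hIdef.symm t ht
      rw [hKdef]
      calc |f t - A| ≤ Ir ^ (1/p) * (2:ℝ) ^ ((1:ℝ)/p) * (1 - θ)⁻¹ := this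
        _ = Ir ^ (1/p) * ((2:ℝ) ^ ((1:ℝ)/p) * (1 - θ)⁻¹) := by ring
    have hB0 : (0:ℝ) ≤ C * (Ir + |f 0| ^ p) := by
      have : (0:ℝ) ≤ |f 0| ^ p := Real.rpow_nonneg (abs_nonneg _) _
      nlinarith
    have hsup : (⨆ t ∈ Icc (0:ℝ) 1, |f t| ^ p) ≤ C * (Ir + |f 0| ^ p) := by
      refine Real.iSup_le (fun t => Real.iSup_le (fun ht => ?_) hB0) hB0
      have h1 := hchain t ht
      have h2 := hchain 0 h0mem
      have hft0 : |f t - f 0| ≤ 2 * (Ir ^ (1/p) * K) := by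
        calc |f t - f 0| ≤ |f t - A| + |A - f 0| := abs_sub_le _ _ _
          _ = |f t - A| + |f 0 - A| := by rw [abs_sub_comm A (f 0)]
          _ ≤ 2 * (Ir ^ (1/p) * K) := by linarith
      have hft : |f t| ≤ 2 * (Ir ^ (1/p) * K) + |f 0| := by
        calc |f t| = |(f t - f 0) + f 0| := by ring_nf
          _ ≤ |f t - f 0| + |f 0| := abs_add_le _ _
          _ ≤ 2 * (Ir ^ (1/p) * K) + |f 0| := by linarith
      have hpos1 : (0:ℝ) ≤ 2 * (Ir ^ (1/p) * K) := by positivity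
      calc |f t| ^ p ≤ (2 * (Ir ^ (1/p) * K) + |f 0|) ^ p :=
            Real.rpow_le_rpow (abs_nonneg _) hft hp0.le
        _ ≤ 2 ^ p * ((2 * (Ir ^ (1/p) * K)) ^ p + |f 0| ^ p) :=
            add_rpow_le' _ _ p hpos1 (abs_nonneg _) hp0.le
        _ = 2 ^ p * ((2 * K) ^ p * Ir + |f 0| ^ p) := by
            congr 2
            rw [show 2 * (Ir ^ (1/p) * K) = (2 * K) * Ir ^ (1/p) by ring,
              Real.mul_rpow (by linarith) (Real.rpow_nonneg hIr0 _),
              ← Real.rpow_mul hIr0, one_div, inv_mul_cancel₀ hp0.ne', Real.rpow_one]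
        _ ≤ C * (Ir + |f 0| ^ p) := by
            rw [hCdef]
            have hy : (0:ℝ) ≤ |f 0| ^ p := Real.rpow_nonneg (abs_nonneg _) _
            have h2K : (0:ℝ) ≤ (2 * K) ^ p := Real.rpow_nonneg (by linarith) _
            have h2p : (0:ℝ) < (2:ℝ) ^ p := Real.rpow_pos_of_pos two_pos _
            nlinarith [mul_nonneg h2K hy, mul_nonneg h2K hIr0]
    calc ENNReal.ofReal (⨆ t ∈ Icc (0:ℝ) 1, |f t| ^ p)
        ≤ ENNReal.ofReal (C * (Ir + |f 0| ^ p)) := ENNReal.ofReal_le_ofReal hsup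
      _ = ENNReal.ofReal C * ENNReal.ofReal (Ir + |f 0| ^ p) := ENNReal.ofReal_mul hC0.le
      _ ≤ ENNReal.ofReal C * (ENNReal.ofReal Ir + ENNReal.ofReal (|f 0| ^ p)) :=
          mul_le_mul_right ENNReal.ofReal_add_le _
      _ = ENNReal.ofReal C * (I + ENNReal.ofReal (|f 0| ^ p)) := by
          rw [hIrdef, ENNReal.ofReal_toReal hItop]
end
end

section
/- Let H ∈ (0,1/2) and s > 0. Then for every t > s, the function t ↦ K_H(t,s) is differentiable at t with derivative ∂K_H(t,s)/∂t = c_H · (H − 1/2) · (t/s)^{H − 1/2} · (t − s)^{H − 3/2}. -/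
open MeasureTheory Set
open scoped ENNReal NNReal

noncomputable section

/-- The Beta function. -/
def realBeta (x y : ℝ) : ℝ := Real.Gamma x * Real.Gamma y / Real.Gamma (x + y)

/-- The constant `c_H = (2H/((1−2H)·B(1−2H, H+1/2)))^{1/2}`. -/
def cH (H : ℝ) : ℝ := Real.sqrt (2 * H / ((1 - 2 * H) * realBeta (1 - 2 * H) (H + 1 / 2)))

/-- The kernel
`K_H(t,s) = c_H[(t/s)^{H−1/2}(t−s)^{H−1/2} + (1/2−H)s^{1/2−H}∫_s^t u^{H−3/2}(u−s)^{H−1/2}du]`. -/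
def KH (H t s : ℝ) : ℝ :=
  cH H * ((t / s) ^ (H - 1 / 2) * (t - s) ^ (H - 1 / 2) +
    (1 / 2 - H) * s ^ (1 / 2 - H) *
      ∫ u in Set.Ioo s t, u ^ (H - 3 / 2) * (u - s) ^ (H - 1 / 2))

/-- for `H ∈ (0,1/2)` and `0 < s < t`, the map `t ↦ K_H(t,s)` is
differentiable at `t` with derivative `c_H(H−1/2)(t/s)^{H−1/2}(t−s)^{H−3/2}`. -/
theorem stmt16 (H s : ℝ) (hH0 : 0 < H) (hH : H < 1 / 2) (hs : 0 < s) :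
    ∀ t : ℝ, s < t →
      HasDerivAt (fun r => KH H r s)
        (cH H * (H - 1 / 2) * (t / s) ^ (H - 1 / 2) * (t - s) ^ (H - 3 / 2)) t := by
  intro t ht
  have ht0 : 0 < t := hs.trans ht
  have hts : 0 < t - s := sub_pos.2 ht
  have hds : (0 : ℝ) < t / s := div_pos ht0 hs
  set a : ℝ := H - 1 / 2 with ha
  have ham1 : (-1 : ℝ) < a := by rw [ha]; linarith
  -- derivative of the first product
  have h1 : HasDerivAt (fun r : ℝ => (r / s) ^ a) (a * (t / s) ^ (a - 1) * (1 / s)) t := by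
    have := (Real.hasDerivAt_rpow_const (x := t / s) (p := a) (Or.inl hds.ne')).comp t
      ((hasDerivAt_id t).div_const s)
    exact this
  have h2 : HasDerivAt (fun r : ℝ => (r - s) ^ a) (a * (t - s) ^ (a - 1)) t := by
    have := (Real.hasDerivAt_rpow_const (x := t - s) (p := a) (Or.inl hts.ne')).comp t
      ((hasDerivAt_id t).sub_const s)
    rw [mul_one] at this
    exact this
  -- the integrand
  set f : ℝ → ℝ := fun u => u ^ (H - 3 / 2) * (u - s) ^ a with hf
  have hcontf : ∀ x ∈ Set.Ioi s, ContinuousAt f x := by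
    intro x hx
    have hx0 : 0 < x := hs.trans hx
    have hxs : 0 < x - s := sub_pos.2 hx
    exact (Real.continuousAt_rpow_const x _ (Or.inl hx0.ne')).mul
      (ContinuousAt.rpow_const (continuousAt_id.sub continuousAt_const) (Or.inl hxs.ne'))
  have hint : IntervalIntegrable f volume s t := by
    have hbase : IntervalIntegrable (fun u : ℝ => (u - s) ^ a) volume s t := by
      have := (intervalIntegral.intervalIntegrable_rpow' (a := 0) (b := t - s) ham1).comp_sub_right s
      simpa using this
    refine hbase.continuousOn_mul ?_
    intro u hu
    have hu' : u ∈ Set.Icc s t := by rwa [Set.uIcc_of_le ht.le] at hu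
    have hu0 : 0 < u := lt_of_lt_of_le hs hu'.1
    exact (Real.continuousAt_rpow_const u _ (Or.inl hu0.ne')).continuousWithinAt
  have hF : HasDerivAt (fun r => ∫ u in s..r, f u) (f t) t :=
    intervalIntegral.integral_hasDerivAt_right hint
      (ContinuousAt.stronglyMeasurableAtFilter isOpen_Ioi hcontf t ht)
      (hcontf t ht)
  -- replace the interval integral with the integral over `Ioo`
  have heq : (fun r => ∫ u in Set.Ioo s r, f u) =ᶠ[nhds t] fun r => ∫ u in s..r, f u := by
    filter_upwards [lt_mem_nhds ht] with r hr
    rw [intervalIntegral.integral_of_le hr.le, MeasureTheory.integral_Ioc_eq_integral_Ioo]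
  have hF' : HasDerivAt (fun r => ∫ u in Set.Ioo s r, f u) (f t) t :=
    hF.congr_of_eventuallyEq heq
  have hsum := ((h1.mul h2).add (hF'.const_mul ((1 / 2 - H) * s ^ (1 / 2 - H)))).const_mul (cH H)
  have hKH : (fun r => KH H r s) =
      fun r => cH H * ((r / s) ^ a * (r - s) ^ a +
        (1 / 2 - H) * s ^ (1 / 2 - H) * ∫ u in Set.Ioo s r, f u) := by
    funext r; rw [KH]
  rw [hKH]
  convert hsum using 1
  case e'_4 => rfl
  case e'_5 => rfl
  case e'_8 => rfl
  -- algebraic identity between the two derivative expressions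
  have e6 : s ^ (a - 1) ≠ 0 := (Real.rpow_pos_of_pos hs (a - 1)).ne'
  have e1 : (t / s) ^ a = (t / s) ^ (a - 1) * (t / s) := by
    rw [← Real.rpow_add_one hds.ne']; congr 1; ring
  have e2 : (t - s) ^ a = (t - s) ^ (a - 1) * (t - s) := by
    rw [← Real.rpow_add_one hts.ne']; congr 1; ring
  have hts3 : (t - s) ^ (H - 3 / 2) = (t - s) ^ (a - 1) := by
    congr 1; rw [ha]; ring
  have hta : t ^ (H - 3 / 2) = (t / s) ^ (a - 1) * s ^ (a - 1) := by
    rw [Real.div_rpow ht0.le hs.le, div_mul_cancel₀ _ e6]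
    congr 1; rw [ha]; ring
  have hsa : s ^ (1 / 2 - H) = (s ^ (a - 1))⁻¹ * s⁻¹ := by
    rw [show (1 : ℝ) / 2 - H = -(a - 1) + (-1) by rw [ha]; ring,
      Real.rpow_add hs, Real.rpow_neg hs.le, Real.rpow_neg_one]
  rw [hf]
  simp only
  rw [e1, e2, hts3, hta, hsa]
  have h2H : (1 : ℝ) / 2 - H = -a := by rw [ha]; ring
  rw [h2H]
  field_simp
  ring
end
end
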